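/- For every positive integer i, the identity \sum_{s=0}^{i-1} (i-s)(i-s-1)\,\binom{2i}{s} = i\,\bigl(2^{2i-2} - \binom{2i-1}{i}\bigr) holds. -/

import Mathlib

open Finset

private lemma key_id (i s : ℕ) (hi : 0 < i) :
    ((i : ℚ) - (s+1)) * ((2*i).choose (s+1) : ℚ)
      = (i : ℚ) * (((2*i-1).choose (s+1) : ℚ) - ((2*i-1).choose s : ℚ)) := by
  have h2i : 2*i = (2*i-1) + 1 := by omega
  have hpascal : ((2*i).choose (s+1) : ℚ)
      = ((2*i-1).choose s : ℚ) + ((2*i-1).choose (s+1) : ℚ) := by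
    rw [h2i, Nat.choose_succ_succ]; push_cast; ring
  have habs : ((s:ℚ)+1) * ((2*i).choose (s+1) : ℚ)
      = 2 * (i:ℚ) * ((2*i-1).choose s : ℚ) := by
    have h := Nat.add_one_mul_choose_eq (2*i-1) s
    have h' : (2*i) * ((2*i-1).choose s) = ((2*i).choose (s+1)) * (s+1) := by
      simpa [Nat.succ_eq_add_one, ← h2i] using h
    have := congrArg (fun n : ℕ => (n : ℚ)) h'
    push_cast at this
    linarith [this]
  nlinarith [hpascal, habs]

private lemma P1 (i : ℕ) (hi : 0 < i) :
    (∑ s ∈ range i, ((i:ℚ) - s) * ((2*i).choose s : ℚ))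
      = (i:ℚ) * ((2*i-1).choose (i-1) : ℚ) := by
  obtain ⟨j, rfl⟩ : ∃ j, i = j + 1 := ⟨i-1, by omega⟩
  rw [Finset.sum_range_succ']
  have hps : ∀ s : ℕ, (((j+1 : ℕ) : ℚ) - ((s+1 : ℕ) : ℚ)) * (((2*(j+1)).choose (s+1) : ℕ) : ℚ)
      = ((j+1 : ℕ) : ℚ) * (((2*(j+1)-1).choose (s+1) : ℚ) - ((2*(j+1)-1).choose s : ℚ)) := by
    intro s
    have h := key_id (j+1) s (by omega)
    push_cast at h ⊢
    linear_combination h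
  simp only [hps]
  rw [← Finset.mul_sum, Finset.sum_range_sub (fun s => ((2*(j+1)-1).choose s : ℚ))]
  simp [Nat.add_sub_cancel]
  ring

private lemma PF (i : ℕ) (hi : 0 < i) :
    (∑ s ∈ range (2*i+1), ((i:ℚ) - s) * ((i:ℚ) - s - 1) * ((2*i).choose s : ℚ))
      = (i:ℚ) * 2 ^ (2*i-1) := by
  rw [Finset.sum_range_succ']
  have hps : ∀ s : ℕ, ((i : ℚ) - ((s+1 : ℕ) : ℚ)) * ((i : ℚ) - ((s+1 : ℕ) : ℚ) - 1)
        * (((2*i).choose (s+1) : ℕ) : ℚ)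
      = (i:ℚ) * ((((i:ℚ) - ((s+1 : ℕ) : ℚ) - 1) * ((2*i-1).choose (s+1) : ℚ)
          - ((i:ℚ) - s - 1) * ((2*i-1).choose s : ℚ)) + ((2*i-1).choose s : ℚ)) := by
    intro s
    have h := key_id i s hi
    push_cast at h ⊢
    linear_combination ((i:ℚ) - (s+1) - 1) * h
  simp only [hps]
  rw [← Finset.mul_sum, Finset.sum_add_distrib,
    Finset.sum_range_sub (fun s => ((i:ℚ) - s - 1) * ((2*i-1).choose s : ℚ))]
  have hzero : ((2*i-1).choose (2*i) : ℚ) = 0 := by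
    rw [Nat.choose_eq_zero_of_lt (by omega)]; simp
  have hdsum : (∑ s ∈ range (2*i), ((2*i-1).choose s : ℚ)) = 2 ^ (2*i-1) := by
    have h2i : 2*i = (2*i-1) + 1 := by omega
    have h := Nat.sum_range_choose (2*i-1)
    rw [h2i]
    exact_mod_cast congrArg (fun n : ℕ => (n : ℚ)) h
  rw [hdsum]
  push_cast [hzero, Nat.choose_zero_right]
  ring

/-- The count in the proof of Proposition 4.3: for every positive integer `i`,
`∑_{s=0}^{i-1} (i-s)(i-s-1)·C(2i, s) = i·(2^(2i-2) - C(2i-1, i))`. -/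
theorem sum_A1_count (i : ℕ) (hi : 0 < i) :
    (∑ s ∈ Finset.range i, ((i : ℚ) - s) * ((i : ℚ) - s - 1) * Nat.choose (2 * i) s) =
      (i : ℚ) * (2 ^ (2 * i - 2) - Nat.choose (2 * i - 1) i) := by
  set f : ℕ → ℚ := fun s => ((i : ℚ) - s) * ((i : ℚ) - s - 1) * ((2*i).choose s : ℚ) with hf
  set φ : ℕ → ℚ := fun j => (j:ℚ) * ((j:ℚ)+1) * (((2*i).choose (i-j) : ℕ) : ℚ) with hφ
  have hsplit : (∑ s ∈ range (2*i+1), f s)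
      = (∑ s ∈ range i, f s) + ∑ j ∈ range (i+1), f (i+j) := by
    rw [show 2*i+1 = i + (i+1) by omega, Finset.sum_range_add]
  have htail1 : (∑ j ∈ range (i+1), f (i+j)) = ∑ j ∈ range (i+1), φ j := by
    refine Finset.sum_congr rfl fun j hj => ?_
    have hji : j ≤ i := by simpa using Nat.lt_succ_iff.mp (Finset.mem_range.mp hj)
    have hsym : (2*i).choose (i+j) = (2*i).choose (i-j) := by
      have := Nat.choose_symm (show i+j ≤ 2*i by omega)
      rw [show 2*i - (i+j) = i - j by omega] at this
      exact this.symm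
    simp only [hf, hφ, hsym]
    push_cast
    ring
  have htail2 : (∑ j ∈ range (i+1), φ j)
      = ∑ j ∈ range (i+1), ((i:ℚ) - j) * ((i:ℚ) - j + 1) * (((2*i).choose j : ℕ) : ℚ) := by
    rw [← Finset.sum_range_reflect φ (i+1)]
    refine Finset.sum_congr rfl fun j hj => ?_
    have hji : j ≤ i := by simpa using Nat.lt_succ_iff.mp (Finset.mem_range.mp hj)
    simp only [hφ]
    rw [show i + 1 - 1 - j = i - j by omega, show i - (i - j) = j by omega]
    push_cast [Nat.cast_sub hji]
    ring_nf
  have htail3 : (∑ j ∈ range (i+1), ((i:ℚ) - j) * ((i:ℚ) - j + 1) * (((2*i).choose j : ℕ) : ℚ))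
      = (∑ s ∈ range i, f s) + 2 * ((i:ℚ) * ((2*i-1).choose (i-1) : ℚ)) := by
    rw [Finset.sum_range_succ]
    have hlast : ((i:ℚ) - (i:ℕ)) * ((i:ℚ) - (i:ℕ) + 1) * (((2*i).choose i : ℕ) : ℚ) = 0 := by
      ring
    rw [hlast, add_zero, ← P1 i hi, Finset.mul_sum, ← Finset.sum_add_distrib]
    refine Finset.sum_congr rfl fun j hj => ?_
    simp only [hf]
    ring
  have hF := PF i hi
  have hS : (∑ s ∈ range (2*i+1), f s) = (i:ℚ) * 2 ^ (2*i-1) := hF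
  have hsym2 : ((2*i-1).choose (i-1) : ℚ) = ((2*i-1).choose i : ℚ) := by
    have := Nat.choose_symm (show i ≤ 2*i-1 by omega)
    rw [show 2*i-1 - i = i - 1 by omega] at this
    exact_mod_cast congrArg (fun n : ℕ => (n : ℚ)) this
  have hpow : (2:ℚ) ^ (2*i-1) = 2 * 2 ^ (2*i-2) := by
    rw [show 2*i-1 = (2*i-2)+1 by omega]; ring
  rw [hsplit, htail1, htail2, htail3, hsym2, hpow] at hS
  linarith [hS]
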